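/- Let G be a graph of order n > 2 with m edges, and suppose the second largest vertex degree Δ₂ satisfies Δ₂ < 2m/n. Then Δ₂ = d₃, i.e., the third largest degree of G equals the second largest degree. -/

import Mathlib

open Finset

/-- The `k`-th largest element (1-indexed) of a multiset of naturals, with default `0`. -/
def kthLargestN (s : Multiset ℕ) (k : ℕ) : ℕ :=
  (s.sort (· ≤ ·)).reverse.getD (k - 1) 0

/-- `degSeq G k` is the `k`-th largest vertex degree (1-indexed) of `G`,
so `degSeq G 1 = Δ₁` and `degSeq G 2 = Δ₂`. -/
def degSeq {n : ℕ} (G : SimpleGraph (Fin n)) [DecidableRel G.Adj] (k : ℕ) : ℕ :=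
  kthLargestN (Finset.univ.val.map (fun v => G.degree v)) k

/-- Key combinatorial lemma about nonincreasing lists. -/
lemma key_list {n : ℕ} (hn : 2 < n) (l : List ℕ) (hlen : l.length = n)
    (hsorted : l.Pairwise (· ≥ ·)) (hub : ∀ x ∈ l, x < n)
    (hlt : n * l.getD 1 0 < l.sum) :
    l.getD 1 0 = l.getD 2 0 := by
  obtain ⟨a, b, c, rest, rfl⟩ : ∃ a b c rest, l = a :: b :: c :: rest := by
    rcases l with _ | ⟨a, _ | ⟨b, _ | ⟨c, rest⟩⟩⟩ <;> simp_all <;> omega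
  simp only [List.getD_cons_succ, List.getD_cons_zero] at hlt ⊢
  rw [List.pairwise_cons, List.pairwise_cons, List.pairwise_cons] at hsorted
  obtain ⟨ha, hb, hc, -⟩ := hsorted
  have hbc : c ≤ b := hb c (by simp)
  by_contra hne
  have hcb : c + 1 ≤ b := by omega
  have hrest : rest.sum ≤ rest.length * c := by
    have := List.sum_le_card_nsmul rest c (fun x hx => hc x hx)
    simpa [smul_eq_mul, Nat.mul_comm] using this
  have hrlen : rest.length = n - 3 := by simp at hlen; omega
  have han : a < n := hub a (by simp)
  have hsum : (a :: b :: c :: rest).sum = a + b + c + rest.sum := by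
    simp [add_assoc]
  rw [hsum] at hlt
  have h1 : (n - 3) * (c + 1) ≤ (n - 3) * b := Nat.mul_le_mul_left _ hcb
  have h2 : n * b = 3 * b + (n - 3) * b := by
    rw [← add_mul, Nat.add_sub_cancel' (by omega : 3 ≤ n)]
  rw [Nat.mul_add, Nat.mul_one] at h1
  rw [hrlen] at hrest
  omega

/-- Let `G` be a graph of order `n > 2` with `m` edges and suppose
`Δ₂ < 2m/n`. Then `Δ₂ = d₃`. -/
theorem stmt1 {n : ℕ} (hn : 2 < n) (G : SimpleGraph (Fin n)) [DecidableRel G.Adj]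
    (h : (degSeq G 2 : ℝ) < 2 * (G.edgeFinset.card : ℝ) / n) :
    degSeq G 2 = degSeq G 3 := by
  have hn0 : (0 : ℝ) < n := by positivity
  set s : Multiset ℕ := Finset.univ.val.map (fun v => G.degree v) with hs
  set l : List ℕ := (s.sort (· ≤ ·)).reverse with hl
  have hlen : l.length = n := by
    simp [hl, hs]
  have hsorted : l.Pairwise (· ≥ ·) := by
    rw [hl, List.pairwise_reverse]
    exact Multiset.pairwise_sort s (· ≤ ·)
  have hub : ∀ x ∈ l, x < n := by
    intro x hx
    rw [hl, List.mem_reverse, Multiset.mem_sort, hs, Multiset.mem_map] at hx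
    obtain ⟨v, -, rfl⟩ := hx
    simpa using G.degree_lt_card_verts v
  have hsum : l.sum = 2 * G.edgeFinset.card := by
    rw [hl, List.sum_reverse]
    rw [← Multiset.sum_coe, Multiset.sort_eq, hs]
    exact G.sum_degrees_eq_twice_card_edges
  have hdeg2 : degSeq G 2 = l.getD 1 0 := rfl
  have hdeg3 : degSeq G 3 = l.getD 2 0 := rfl
  rw [hdeg2, hdeg3]
  apply key_list hn l hlen hsorted hub
  have hlt : (n : ℝ) * (l.getD 1 0 : ℝ) < 2 * G.edgeFinset.card := by
    rw [← hdeg2]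
    calc (n : ℝ) * (degSeq G 2 : ℝ) < n * (2 * G.edgeFinset.card / n) := by
          exact mul_lt_mul_of_pos_left h hn0
      _ = 2 * G.edgeFinset.card := by field_simp
  rw [hsum]
  exact_mod_cast hlt
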